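/- arXiv:1201.0303 — 4 statements merged into one kernel-verified Lean document; each statement's English description precedes it below -/
import Mathlib

section
/- Let V be a finite dimensional vector space over a field, and let B' and B'' be two bases of V. For a ∈ {1,2}, let C_a be a partially ordered set with bijections b'_a : C_a → B' and b''_a : C_a → B''. Suppose that for each a, the transition matrix between B' and B'' is lower unitriangular with respect to the indexing (C_a, b'_a, b''_a); that is, ⟨(b''_a(c))^*, b'_a(c)⟩ = 1 for all c ∈ C_a, and ⟨(b''_a(c))^*, b'_a(d)⟩ ≠ 0 implies c ≤ d in C_a. Then b''_1 ∘ (b'_1)^{-1} = b''_2 ∘ (b'_2)^{-1} as maps B' → B''. -/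
/-- uniqueness of the bijection given lower unitriangular
transition matrices with respect to two poset indexings. -/
theorem stmt_0 {K V : Type*} [Field K] [AddCommGroup V] [Module K V]
    [FiniteDimensional K V]
    {ι ι' C₁ C₂ : Type*} [PartialOrder C₁] [PartialOrder C₂]
    (B' : Module.Basis ι K V) (B'' : Module.Basis ι' K V)
    (b₁' : C₁ ≃ ι) (b₁'' : C₁ ≃ ι') (b₂' : C₂ ≃ ι) (b₂'' : C₂ ≃ ι')
    (h₁diag : ∀ c : C₁, B''.repr (B' (b₁' c)) (b₁'' c) = 1)
    (h₁tri : ∀ c d : C₁, B''.repr (B' (b₁' d)) (b₁'' c) ≠ 0 → c ≤ d)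
    (h₂diag : ∀ c : C₂, B''.repr (B' (b₂' c)) (b₂'' c) = 1)
    (h₂tri : ∀ c d : C₂, B''.repr (B' (b₂' d)) (b₂'' c) ≠ 0 → c ≤ d) :
    ∀ x : ι, b₁'' (b₁'.symm x) = b₂'' (b₂'.symm x) := by
  have hι : Finite ι := Module.Finite.finite_basis B'
  have hC : Finite C₁ := Finite.of_equiv ι b₁'.symm
  set F : C₁ → C₁ := fun d => b₁''.symm (b₂'' (b₂'.symm (b₁' d))) with hF
  have hinj : Function.Injective F := by
    intro a b h
    simp only [hF] at h
    exact b₁'.injective (b₂'.symm.injective (b₂''.injective (b₁''.symm.injective h)))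
  have hle : ∀ d, F d ≤ d := by
    intro d
    apply h₁tri
    have h2 := h₂diag (b₂'.symm (b₁' d))
    rw [Equiv.apply_symm_apply] at h2
    simp only [hF, Equiv.apply_symm_apply]
    rw [h2]
    exact one_ne_zero
  have hid : ∀ d, F d = d := by
    intro d
    induction d using WellFoundedLT.induction with
    | _ d ih =>
      rcases lt_or_eq_of_le (hle d) with h | h
      · have := ih (F d) h
        exact hinj this
      · exact h
  intro x
  have := hid (b₁'.symm x)
  simp only [hF, Equiv.apply_symm_apply] at this
  calc b₁'' (b₁'.symm x) = b₁'' (b₁''.symm (b₂'' (b₂'.symm x))) := by rw [this]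
    _ = b₂'' (b₂'.symm x) := b₁''.apply_symm_apply _
end

section
/- In the setting of a lower normal crystal B with involution σ, define the relation (b', b'') ≈ (c', c'') on B × B if one of: (i) there is i with φ_i(b') = φ_i(b'') and (c', c'') = (ẽ_i b', ẽ_i b''); (ii) there is i with φ_i(b') = φ_i(b'') > 0 and (c', c'') = (f̃_i b', f̃_i b''); (iii) (c', c'') = (σ(b'), σ(b'')). Define b' ≤_str b'' iff wt(b') = wt(b'') and for every finite chain (b', b'') = (b'_0, b''_0) ≈ ... ≈ (b'_ℓ, b''_ℓ) one has φ_i(b'_ℓ) ≤ φ_i(b''_ℓ) for all i. Then ≤_str is transitive: if b' ≤_str b'' and b'' ≤_str b''', then b' ≤_str b'''. -/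
namespace Stmt12

variable {B I P : Type*}

/-- Elementary move `≈` on pairs of crystal elements. -/
def Move (φ : I → B → ℤ) (e f : I → B → Option B) (σ : B → B)
    (p q : B × B) : Prop :=
  (∃ i, φ i p.1 = φ i p.2 ∧ e i p.1 = some q.1 ∧ e i p.2 = some q.2) ∨
  (∃ i, φ i p.1 = φ i p.2 ∧ 0 < φ i p.1 ∧
    f i p.1 = some q.1 ∧ f i p.2 = some q.2) ∨
  (q = (σ p.1, σ p.2))

/-- The string order `≤_str`. -/
def leStr (wt : B → P) (φ : I → B → ℤ) (e f : I → B → Option B) (σ : B → B)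
    (b' b'' : B) : Prop :=
  wt b' = wt b'' ∧
    ∀ p : B × B, Relation.ReflTransGen (Move φ e f σ) (b', b'') p →
      ∀ i : I, φ i p.1 ≤ φ i p.2

/-- the string order is transitive (in a lower normal crystal
with involution σ, where `ẽᵢ` is everywhere defined and `f̃ᵢ b` is defined
whenever `φᵢ(b) > 0`). -/
theorem stmt_12 (wt : B → P) (φ : I → B → ℤ) (e f : I → B → Option B)
    (σ : B → B)
    (he : ∀ (i : I) (b : B), ∃ c, e i b = some c)
    (hf : ∀ (i : I) (b : B), 0 < φ i b → ∃ c, f i b = some c)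
    (b' b'' b''' : B)
    (h1 : leStr wt φ e f σ b' b'') (h2 : leStr wt φ e f σ b'' b''') :
    leStr wt φ e f σ b' b''' := by
  obtain ⟨hw1, hc1⟩ := h1
  obtain ⟨hw2, hc2⟩ := h2
  refine ⟨hw1.trans hw2, ?_⟩
  -- Key lifting lemma: any chain from (b', b''') lifts to parallel chains
  have key : ∀ p : B × B, Relation.ReflTransGen (Move φ e f σ) (b', b''') p →
      ∃ m : B, Relation.ReflTransGen (Move φ e f σ) (b', b'') (p.1, m) ∧
        Relation.ReflTransGen (Move φ e f σ) (b'', b''') (m, p.2) := by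
    intro p hp
    induction hp with
    | refl => exact ⟨b'', .refl, .refl⟩
    | tail hstep hmove ih =>
      rename_i p q
      obtain ⟨m, hm1, hm2⟩ := ih
      rcases hmove with ⟨i, hφ, he1, he2⟩ | ⟨i, hφ, hpos, hf1, hf2⟩ | hσ
      · -- φ i m = φ i p.1 = φ i p.2
        have hle1 : φ i p.1 ≤ φ i m := hc1 (p.1, m) hm1 i
        have hle2 : φ i m ≤ φ i p.2 := hc2 (m, p.2) hm2 i
        have hm : φ i m = φ i p.1 := le_antisymm (hφ ▸ hle2) hle1
        obtain ⟨c, hcm⟩ := he i m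
        exact ⟨c, hm1.tail (Or.inl ⟨i, hm.symm, he1, hcm⟩),
          hm2.tail (Or.inl ⟨i, hm.trans hφ, hcm, he2⟩)⟩
      · have hle1 : φ i p.1 ≤ φ i m := hc1 (p.1, m) hm1 i
        have hle2 : φ i m ≤ φ i p.2 := hc2 (m, p.2) hm2 i
        have hm : φ i m = φ i p.1 := le_antisymm (hφ ▸ hle2) hle1
        obtain ⟨c, hcm⟩ := hf i m (hm ▸ hpos)
        exact ⟨c, hm1.tail (Or.inr (Or.inl ⟨i, hm.symm, hpos, hf1, hcm⟩)),
          hm2.tail (Or.inr (Or.inl ⟨i, hm.trans hφ, hm ▸ hpos, hcm, hf2⟩))⟩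
      · refine ⟨σ m, ?_, ?_⟩
        · have := hm1.tail (show Move φ e f σ (p.1, m) (σ p.1, σ m) from
            Or.inr (Or.inr rfl))
          simpa [hσ] using this
        · have := hm2.tail (show Move φ e f σ (m, p.2) (σ m, σ p.2) from
            Or.inr (Or.inr rfl))
          simpa [hσ] using this
  intro p hp i
  obtain ⟨m, hm1, hm2⟩ := key p hp
  exact (hc1 (p.1, m) hm1 i).trans (hc2 (m, p.2) hm2 i)

end Stmt12
end

section
/- Let N be a positive integer, β_1, ..., β_N vectors in a rational vector space V, and γ_1, ..., γ_N linear functionals on V such that ⟨γ_k, β_ℓ⟩ ≥ 0 for k ≥ ℓ, ⟨γ_k, β_ℓ⟩ ≤ 0 for k < ℓ, and ⟨γ_k, β_k⟩ = 1. For n, m ∈ ℕ^N with Σ n_t β_t = Σ m_t β_t, write n ≤ m iff Σ_{t=1}^k ⟨γ_k, β_t⟩ n_t ≤ Σ_{t=1}^k ⟨γ_k, β_t⟩ m_t for all k. Then ≤ is refined by the lexicographic order: n ≤ m and n ≠ m implies n <_lex m; in particular ≤ is antisymmetric. -/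
/-- Strict lexicographic order on ℕ-tuples. -/
def lexLtNat {N : ℕ} (n m : Fin N → ℕ) : Prop :=
  ∃ k : Fin N, n k < m k ∧ ∀ j : Fin N, j < k → n j = m j

/-- the order on Lusztig data determined by the chamber
coweight pairings is refined by the lexicographic order; in particular it
is antisymmetric. -/
theorem stmt_13 {V : Type*} [AddCommGroup V] [Module ℚ V] (N : ℕ) (hN : 0 < N)
    (β : Fin N → V) (γ : Fin N → (V →ₗ[ℚ] ℚ))
    (hpos : ∀ k l : Fin N, l ≤ k → 0 ≤ γ k (β l))
    (hneg : ∀ k l : Fin N, k < l → γ k (β l) ≤ 0)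
    (hdiag : ∀ k : Fin N, γ k (β k) = 1)
    (n m : Fin N → ℕ)
    (hwt : ∑ t, (n t : ℚ) • β t = ∑ t, (m t : ℚ) • β t)
    (hle : ∀ k : Fin N,
      ∑ t ∈ Finset.univ.filter (fun t => t ≤ k), γ k (β t) * n t ≤
        ∑ t ∈ Finset.univ.filter (fun t => t ≤ k), γ k (β t) * m t) :
    n ≠ m → lexLtNat n m := by
  intro hne
  obtain ⟨k, hk, hmin⟩ := Finset.exists_min_image
    (Finset.univ.filter fun k => n k ≠ m k) id
    (by
      obtain ⟨k, hk⟩ := Function.ne_iff.mp hne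
      exact ⟨k, by simp [hk]⟩)
  simp only [Finset.mem_filter, Finset.mem_univ, true_and] at hk
  have heq : ∀ j : Fin N, j < k → n j = m j := by
    intro j hj
    by_contra h
    exact absurd (hmin j (by simp [h])) (not_le.mpr hj)
  refine ⟨k, ?_, heq⟩
  have h := hle k
  have split : Finset.univ.filter (fun t => t ≤ k) =
      insert k (Finset.univ.filter (fun t : Fin N => t < k)) := by
    ext t
    simp [le_iff_lt_or_eq, or_comm]
  rw [split, Finset.sum_insert (by simp), Finset.sum_insert (by simp)] at h
  have hsame : ∑ t ∈ Finset.univ.filter (fun t : Fin N => t < k), γ k (β t) * n t =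
      ∑ t ∈ Finset.univ.filter (fun t : Fin N => t < k), γ k (β t) * m t := by
    refine Finset.sum_congr rfl fun t ht => ?_
    rw [heq t (by simpa using ht)]
  rw [hsame, hdiag k, one_mul, one_mul, add_le_add_iff_right] at h
  exact lt_of_le_of_ne (Nat.cast_le.mp h) hk
end

section
/- Let f be an associative Q_+-graded algebra generated by elements θ_i (i ∈ I) with divided powers θ_i^{(n)}, and suppose B', B'' are two bases of f satisfying the canonical-type axioms, giving rise (as in Kashiwara's theory) to structure maps φ_i, f̃_i^max on each basis. Fix i ∈ I, elements b' ∈ B' and b'' ∈ B'' of the same weight, set n_1 = φ_i(b') and b'_1 = f̃_i^max b'. If ⟨(b'')^*, b'⟩ ≠ 0, then either φ_i(b'') > n_1, or b'' = ẽ_i^{n_1} b''_1 for some b''_1 ∈ B'' with φ_i(b''_1) = 0 and ⟨(b''_1)^*, b'_1⟩ = ⟨(b'')^*, b'⟩. Consequently, for any finite sequence i = (i_1,...,i_ℓ) in I, ⟨(b'')^*, b'⟩ ≠ 0 implies Φ_i(b') ≤_lex Φ_i(b''), where Φ_i is the string parametrization. -/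
namespace Stmt16

variable {I : Type*} {β : Type*}

/-- String parametrization along a list of indices, given the functions
`φᵢ` and `f̃ᵢ^max` on a basis of canonical type. -/
def stringPhi (φ : I → β → ℕ) (fmax : I → β → β) : List I → β → List ℕ
  | [], _ => []
  | i :: l, b => φ i b :: stringPhi φ fmax l (fmax i b)

/-- Lexicographic order on lists of naturals (of equal length). -/
def lexLeL : List ℕ → List ℕ → Prop
  | [], [] => True
  | a :: xs, b :: ys => a < b ∨ (a = b ∧ lexLeL xs ys)
  | _, _ => False

/-- for two bases of canonical type, a nonzero transition
coefficient forces the dichotomy on `φᵢ` and `f̃ᵢ^max`, and consequently the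
string parametrizations are lexicographically ordered. -/
theorem stmt_16 {K F : Type*} [Field K] [Ring F] [Algebra K F]
    {β' β'' : Type*}
    (θ : I → F) (θpow : I → ℕ → F)
    (hpow : ∀ (i : I) (n : ℕ), ∃ c : K, c ≠ 0 ∧ θpow i n = c • θ i ^ n)
    (B' : Module.Basis β' K F) (B'' : Module.Basis β'' K F)
    (wt' : β' → (I →₀ ℕ)) (wt'' : β'' → (I →₀ ℕ))
    (φ' : I → β' → ℕ) (φ'' : I → β'' → ℕ)
    (fmax' : I → β' → β') (fmax'' : I → β'' → β'')
    (epow'' : I → ℕ → β'' → β'')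
    (hspan' : ∀ (i : I) (p : ℕ),
      LinearMap.range (LinearMap.mulLeft K (θ i ^ p)) =
        Submodule.span K (B' '' {b : β' | p ≤ φ' i b}))
    (hspan'' : ∀ (i : I) (p : ℕ),
      LinearMap.range (LinearMap.mulLeft K (θ i ^ p)) =
        Submodule.span K (B'' '' {b : β'' | p ≤ φ'' i b}))
    (hfm' : ∀ (i : I) (b : β'), φ' i (fmax' i b) = 0 ∧
      B' b - θpow i (φ' i b) * B' (fmax' i b) ∈
        LinearMap.range (LinearMap.mulLeft K (θ i ^ (φ' i b + 1))))
    (hfm'' : ∀ (i : I) (b : β''), φ'' i (fmax'' i b) = 0 ∧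
      B'' b - θpow i (φ'' i b) * B'' (fmax'' i b) ∈
        LinearMap.range (LinearMap.mulLeft K (θ i ^ (φ'' i b + 1))))
    (hep'' : ∀ (i : I) (n : ℕ) (b : β''), φ'' i b = 0 →
      φ'' i (epow'' i n b) = n ∧ fmax'' i (epow'' i n b) = b ∧
      θpow i n * B'' b - B'' (epow'' i n b) ∈
        LinearMap.range (LinearMap.mulLeft K (θ i ^ (n + 1)))) :
    (∀ (i : I) (b' : β') (b'' : β''), wt' b' = wt'' b'' →
      B''.repr (B' b') b'' ≠ 0 →
        φ' i b' < φ'' i b'' ∨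
        ∃ b''₁ : β'', φ'' i b''₁ = 0 ∧ b'' = epow'' i (φ' i b') b''₁ ∧
          B''.repr (B' (fmax' i b')) b''₁ = B''.repr (B' b') b'') ∧
    (∀ (l : List I) (b' : β') (b'' : β''),
      B''.repr (B' b') b'' ≠ 0 →
        lexLeL (stringPhi φ' fmax' l b') (stringPhi φ'' fmax'' l b'')) := by
  classical
  -- coefficients of elements of `θᵢᵖ f` vanish on basis elements with `φ'' < p`
  have lemB : ∀ (i : I) (p : ℕ) (v : F),
      v ∈ LinearMap.range (LinearMap.mulLeft K (θ i ^ p)) →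
      ∀ b : β'', φ'' i b < p → B''.repr v b = 0 := by
    intro i p v hv b hb
    rw [hspan'' i p, Module.Basis.mem_span_image] at hv
    by_contra h
    have hmem : b ∈ (B''.repr v).support := Finsupp.mem_support_iff.2 h
    have := hv hmem
    simp only [Set.mem_setOf_eq] at this
    omega
  -- `θpow i n * x ∈ range (θ i ^ n)`
  have lemA : ∀ (i : I) (n : ℕ) (x : F),
      θpow i n * x ∈ LinearMap.range (LinearMap.mulLeft K (θ i ^ n)) := by
    intro i n x
    obtain ⟨c, -, hc⟩ := hpow i n
    rw [hc, smul_mul_assoc]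
    exact Submodule.smul_mem _ c ⟨x, by simp [LinearMap.mulLeft_apply]⟩
  -- `θpow i n * (θ i * y) ∈ range (θ i ^ (n+1))`
  have lemA' : ∀ (i : I) (n : ℕ) (y : F),
      θpow i n * (θ i * y) ∈ LinearMap.range (LinearMap.mulLeft K (θ i ^ (n + 1))) := by
    intro i n y
    obtain ⟨c, -, hc⟩ := hpow i n
    rw [hc, smul_mul_assoc]
    refine Submodule.smul_mem _ c ⟨y, ?_⟩
    rw [LinearMap.mulLeft_apply, pow_succ, mul_assoc]
  -- monotonicity
  have mono : ∀ (i : I) (p : ℕ),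
      LinearMap.range (LinearMap.mulLeft K (θ i ^ (p + 1))) ≤
      LinearMap.range (LinearMap.mulLeft K (θ i ^ p)) := by
    rintro i p v ⟨y, rfl⟩
    exact ⟨θ i * y, by rw [LinearMap.mulLeft_apply, LinearMap.mulLeft_apply,
      pow_succ, mul_assoc]⟩
  -- key: `epow'' i n (fmax'' i b'') = b''` when `φ'' i b'' = n`
  have lemD : ∀ (i : I) (n : ℕ) (b'' : β''), φ'' i b'' = n →
      epow'' i n (fmax'' i b'') = b'' := by
    intro i n b'' hn
    obtain ⟨hfz, hfr⟩ := hfm'' i b''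
    rw [hn] at hfr
    obtain ⟨-, -, her⟩ := hep'' i n (fmax'' i b'') hfz
    have hsum : B'' b'' - B'' (epow'' i n (fmax'' i b'')) ∈
        LinearMap.range (LinearMap.mulLeft K (θ i ^ (n + 1))) := by
      have := Submodule.add_mem _ hfr her
      simpa using this
    have h0 := lemB i (n + 1) _ hsum b'' (by omega)
    rw [map_sub, Finsupp.sub_apply] at h0
    simp only [Module.Basis.repr_self] at h0
    rw [Finsupp.single_eq_same] at h0
    by_contra hne
    rw [Finsupp.single_eq_of_ne (Ne.symm hne)] at h0
    norm_num at h0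
  -- key coefficient computation
  have lemC : ∀ (i : I) (n : ℕ) (b'' : β''), φ'' i b'' = n → ∀ x : F,
      B''.repr (θpow i n * x) b'' = B''.repr x (fmax'' i b'') := by
    intro i n b'' hn x
    have key : ((Finsupp.lapply b'').comp (B''.repr.toLinearMap.comp
          (LinearMap.mulLeft K (θpow i n))) : F →ₗ[K] K) =
        (Finsupp.lapply (fmax'' i b'')).comp B''.repr.toLinearMap := by
      refine B''.ext fun b => ?_
      simp only [LinearMap.comp_apply, LinearMap.mulLeft_apply,
        LinearEquiv.coe_coe, Finsupp.lapply_apply, Module.Basis.repr_self]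
      by_cases hb : φ'' i b = 0
      · obtain ⟨he1, he2, he3⟩ := hep'' i n b hb
        have h0 := lemB i (n + 1) _ he3 b'' (by omega)
        rw [map_sub, Finsupp.sub_apply, sub_eq_zero] at h0
        rw [h0, Module.Basis.repr_self]
        by_cases hbb : b = fmax'' i b''
        · subst hbb
          rw [lemD i n b'' hn, Finsupp.single_eq_same, Finsupp.single_eq_same]
        · have hne2 : epow'' i n b ≠ b'' := by
            intro hEq
            apply hbb
            rw [← he2, hEq]
          rw [Finsupp.single_eq_of_ne hne2.symm, Finsupp.single_eq_of_ne (Ne.symm hbb)]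
      · -- φ'' i b ≥ 1
        have hmem : B'' b ∈ LinearMap.range (LinearMap.mulLeft K (θ i ^ 1)) := by
          rw [hspan'' i 1]
          exact Submodule.subset_span ⟨b, by simp only [Set.mem_setOf_eq]; omega, rfl⟩
        obtain ⟨y, hy⟩ := hmem
        rw [LinearMap.mulLeft_apply, pow_one] at hy
        have hmem2 : θpow i n * B'' b ∈
            LinearMap.range (LinearMap.mulLeft K (θ i ^ (n + 1))) := by
          rw [← hy]; exact lemA' i n y
        rw [lemB i (n + 1) _ hmem2 b'' (by omega)]
        have : b ≠ fmax'' i b'' := by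
          intro hEq
          exact hb (hEq ▸ (hfm'' i b'').1)
        rw [Finsupp.single_eq_of_ne this.symm]
    exact congrArg (fun L => L x) key ▸ (LinearMap.congr_fun key x)
  -- main dichotomy (no weight hypothesis needed)
  have main : ∀ (i : I) (b' : β') (b'' : β''),
      B''.repr (B' b') b'' ≠ 0 →
        φ' i b' < φ'' i b'' ∨
        ∃ b''₁ : β'', φ'' i b''₁ = 0 ∧ b'' = epow'' i (φ' i b') b''₁ ∧
          B''.repr (B' (fmax' i b')) b''₁ = B''.repr (B' b') b'' := by
    intro i b' b'' hne
    set n := φ' i b' with hn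
    obtain ⟨hf0, hf1⟩ := hfm' i b'
    have hb'mem : B' b' ∈ LinearMap.range (LinearMap.mulLeft K (θ i ^ n)) := by
      have h1 := mono i n hf1
      have h2 := lemA i n (B' (fmax' i b'))
      have := Submodule.add_mem _ h1 h2
      simpa [← hn] using this
    have hle : n ≤ φ'' i b'' := by
      by_contra h
      exact hne (lemB i n _ hb'mem b'' (by omega))
    rcases lt_or_eq_of_le hle with hlt | heq
    · exact Or.inl hlt
    · right
      refine ⟨fmax'' i b'', (hfm'' i b'').1, (lemD i n b'' heq.symm).symm, ?_⟩
      have hc := lemC i n b'' heq.symm (B' (fmax' i b'))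
      rw [← hc]
      have h0 := lemB i (n + 1) _ hf1 b'' (by omega)
      rw [map_sub, Finsupp.sub_apply, sub_eq_zero] at h0
      exact h0.symm
  refine ⟨fun i b' b'' _ hne => main i b' b'' hne, ?_⟩
  intro l
  induction l with
  | nil => intro b' b'' _; trivial
  | cons i l ih =>
    intro b' b'' hne
    show φ' i b' < φ'' i b'' ∨ (φ' i b' = φ'' i b'' ∧ _)
    rcases main i b' b'' hne with h | ⟨b''₁, h0, hEq, hcoef⟩
    · exact Or.inl h
    · obtain ⟨he1, he2, -⟩ := hep'' i (φ' i b') b''₁ h0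
      right
      constructor
      · rw [hEq, he1]
      · show lexLeL (stringPhi φ' fmax' l (fmax' i b')) (stringPhi φ'' fmax'' l (fmax'' i b''))
        rw [hEq, he2]
        exact ih (fmax' i b') b''₁ (by rw [hcoef]; exact hne)

end Stmt16
end
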